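/- Single-variable non-identifiability: given an aADMG G, if there is an undirected path in G_W between X ∈ W and some child of X, then p(W \ X | X̂, W') is not identifiable; specifically, for the aADMG with nodes X, Z₁,…,Z_m, A, edges X→A, X−Z₁, Z₁−Z₂, …, Z_{m−1}−Z_m, Z_m−A, there exist two structural equation models (with parameters (α₁,β₁) and (α₂,β₂) satisfying α₁+β₁ = α₂+β₂ but β₁ ≠ β₂) inducing the same observational distribution p(X, Z₁,…,Z_m, A) but different interventional distributions p(Z₁,…,Z_m, A | X̂). -/

import Mathlib

open MeasureTheory ProbabilityTheory

/-- Non-identifiability counterexample (necessity part of Theorem 9 of the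
paper): for the aADMG with nodes `X, Z₁, …, Z_m, A` and equations
`U_X ~ N(mean, σ)`, `U_{Z_i} = U_X`, `U_A = α·U_{Z_m}`, `X = U_X`,
`Z_j = U_{Z_j}`, `A = β·X + U_A`, there are two parameterizations
`(α₁, β₁)` and `(α₂, β₂)` with `α₁ + β₁ = α₂ + β₂` and `β₁ ≠ β₂` that induce
the same observational joint distribution of `(X, Z₁, …, Z_m, A)` (coordinates
`0, 1, …, m, m+1`) but different post-intervention distributions of
`(Z₁, …, Z_m, A)` under `do(X = x̂)`, where then `A = β·x̂ + α·U_X`. -/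
theorem single_variable_nonidentifiable
    {Ω : Type*} [MeasurableSpace Ω] (μ : Measure Ω) [IsProbabilityMeasure μ]
    (m : ℕ) (hm : 1 ≤ m) (U : Ω → ℝ) (hU : Measurable U)
    (mean : ℝ) (σ : NNReal) (hσ : σ ≠ 0)
    (hlaw : μ.map U = gaussianReal mean σ) :
    ∃ α₁ β₁ α₂ β₂ : ℝ, α₁ + β₁ = α₂ + β₂ ∧ β₁ ≠ β₂ ∧
      (μ.map (fun ω (i : Fin (m + 2)) =>
          if (i : ℕ) = m + 1 then β₁ * U ω + α₁ * U ω else U ω) =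
        μ.map (fun ω (i : Fin (m + 2)) =>
          if (i : ℕ) = m + 1 then β₂ * U ω + α₂ * U ω else U ω)) ∧
      ∃ xhat : ℝ,
        μ.map (fun ω (i : Fin (m + 1)) =>
            if (i : ℕ) = m then β₁ * xhat + α₁ * U ω else U ω) ≠
          μ.map (fun ω (i : Fin (m + 1)) =>
            if (i : ℕ) = m then β₂ * xhat + α₂ * U ω else U ω) := by
  refine ⟨1, 0, 0, 1, by ring, by norm_num, ?_, 0, ?_⟩
  · congr 1
    funext ω i
    split <;> ring
  · -- with β₁ = 0, α₁ = 1 : A = U ω ; with β₂ = 1, α₂ = 0 : A = 0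
    intro h
    have hg1 : Measurable (fun ω (i : Fin (m + 1)) =>
        if (i : ℕ) = m then (0 : ℝ) * 0 + 1 * U ω else U ω) := by
      apply measurable_pi_lambda
      intro i
      split_ifs <;> fun_prop
    have hg2 : Measurable (fun ω (i : Fin (m + 1)) =>
        if (i : ℕ) = m then (1 : ℝ) * 0 + 0 * U ω else U ω) := by
      apply measurable_pi_lambda
      intro i
      split_ifs <;> fun_prop
    have hmlt : m < m + 1 := Nat.lt_succ_self m
    have heval : Measurable (fun f : Fin (m + 1) → ℝ => f ⟨m, hmlt⟩) :=
      measurable_pi_apply _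
    have h2 := congrArg (Measure.map (fun f : Fin (m + 1) → ℝ => f ⟨m, hmlt⟩)) h
    rw [Measure.map_map heval hg1, Measure.map_map heval hg2] at h2
    simp only [Function.comp_def] at h2
    simp only [if_true, zero_mul, one_mul, mul_zero, add_zero, zero_add] at h2
    rw [hlaw, Measure.map_const] at h2
    have hsing : gaussianReal mean σ {0} = 0 := by
      have := gaussianReal_absolutelyContinuous mean hσ
      exact this (by simp)
    rw [h2] at hsing
    simp at hsing
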